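/- Let g : ℝ^d → ℝ^d with |g|² integrable and g not almost everywhere zero, and suppose g is isotropic. Define C := ∫ g(q) g(q)ᵀ dq and D(x) := ∫ g(x − q) g(−q)ᵀ dq. Then for each x ≠ 0, both matrices C + D(x) and C − D(x) are positive definite. -/

import Mathlib

open Matrix MeasureTheory

open ENNReal in
lemma periodic_zero {d : ℕ} {f : (Fin d → ℝ) → ℝ} (hf : Continuous f)
    (hint : Integrable (fun q => f q ^ 2)) {y : Fin d → ℝ} (hy : y ≠ 0)
    (hper : ∀ q, f (q + y) = f q) : ∀ q, f q = 0 := by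
  by_contra hcon
  push_neg at hcon
  obtain ⟨q₀, hq₀⟩ := hcon
  have hy' : 0 < ‖y‖ := norm_pos_iff.mpr hy
  set c : ℝ := f q₀ ^ 2 with hc
  have hcpos : 0 < c := by positivity
  -- find radius δ₀ on which f^2 ≥ c/2
  have hcont : ContinuousAt (fun q => f q ^ 2) q₀ := (hf.pow 2).continuousAt
  obtain ⟨δ₀, hδ₀pos, hδ₀⟩ := Metric.continuousAt_iff.mp hcont (c/2) (by positivity)
  set δ : ℝ := min δ₀ (‖y‖/3) with hδ
  have hδpos : 0 < δ := lt_min hδ₀pos (by positivity)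
  have hball : ∀ z ∈ Metric.ball q₀ δ, c/2 ≤ f z ^ 2 := by
    intro z hz
    have h1 : dist z q₀ < δ₀ := lt_of_lt_of_le hz (min_le_left _ _)
    have := hδ₀ h1
    have := abs_lt.mp (by simpa [Real.dist_eq] using this)
    linarith [this.1]
  -- periodicity for natural multiples
  have hpern : ∀ (n : ℕ) q, f (q + (n : ℝ) • y) = f q := by
    intro n
    induction n with
    | zero => simp
    | succ n ih =>
      intro q
      have : ((n+1 : ℕ) : ℝ) • y = (n : ℝ) • y + y := by push_cast; rw [add_smul, one_smul]
      rw [this, ← add_assoc, hper, ih]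
  -- balls
  set B : ℕ → Set (Fin d → ℝ) := fun n => Metric.ball (q₀ + (n : ℝ) • y) δ with hB
  have hBlow : ∀ n, ∀ z ∈ B n, c/2 ≤ f z ^ 2 := by
    intro n z hz
    have hz' : z - (n : ℝ) • y ∈ Metric.ball q₀ δ := by
      simp only [Metric.mem_ball, dist_eq_norm] at hz ⊢
      have : z - (n:ℝ) • y - q₀ = z - (q₀ + (n:ℝ) • y) := by abel
      rw [this]; exact hz
    have := hball _ hz'
    rwa [← hpern n (z - (n:ℝ) • y), sub_add_cancel] at this
  have hdisj : Pairwise (Function.onFun Disjoint B) := by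
    intro n m hnm
    apply Metric.ball_disjoint_ball
    have : dist (q₀ + (n : ℝ) • y) (q₀ + (m : ℝ) • y) = |(n:ℝ) - m| * ‖y‖ := by
      rw [dist_eq_norm]
      have : q₀ + (n:ℝ)•y - (q₀ + (m:ℝ)•y) = ((n:ℝ) - m) • y := by
        rw [sub_smul]; abel
      rw [this, norm_smul, Real.norm_eq_abs]
    rw [this]
    have h1 : (1:ℝ) ≤ |(n:ℝ) - m| := by
      have : (n:ℝ) - m ≠ 0 := sub_ne_zero.mpr (by exact_mod_cast hnm)
      have : (1:ℤ) ≤ |(n:ℤ) - m| := Int.one_le_abs (sub_ne_zero.mpr (by exact_mod_cast hnm))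
      calc (1:ℝ) ≤ |((n:ℤ) - m : ℤ)| := by exact_mod_cast this
        _ = |(n:ℝ) - m| := by push_cast; simp
    have hδy : δ ≤ ‖y‖/3 := min_le_right _ _
    nlinarith
  -- lintegral bound
  set h : (Fin d → ℝ) → ℝ≥0∞ := fun q => ENNReal.ofReal (f q ^ 2) with hh
  have hmeas : Measurable h := (hf.pow 2).measurable.ennreal_ofReal
  have hfin : ∫⁻ q, h q < ⊤ := by
    have := hint.2
    rw [hasFiniteIntegral_iff_norm] at this
    simp only [Real.norm_eq_abs, abs_pow, sq_abs] at this
    exact this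
  set V : ℝ≥0∞ := volume (Metric.ball (0 : Fin d → ℝ) δ) with hV
  have hVpos : V ≠ 0 := (Metric.measure_ball_pos _ _ hδpos).ne'
  have hlow : ∀ n, ENNReal.ofReal (c/2) * V ≤ ∫⁻ q in B n, h q := by
    intro n
    calc ENNReal.ofReal (c/2) * V = ∫⁻ _ in B n, ENNReal.ofReal (c/2) := by
          rw [setLIntegral_const]
          congr 1
          simp only [hB]
          rw [Measure.addHaar_ball_center]
      _ ≤ ∫⁻ q in B n, h q := by
          apply setLIntegral_mono hmeas
          intro z hz
          exact ENNReal.ofReal_le_ofReal (hBlow n z hz)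
  have htop : (⊤ : ℝ≥0∞) ≤ ∫⁻ q, h q := by
    calc (⊤ : ℝ≥0∞) = ∑' _ : ℕ, ENNReal.ofReal (c/2) * V := by
          rw [ENNReal.tsum_const_eq_top_of_ne_zero]
          simp only [ne_eq, mul_eq_zero, not_or]
          exact ⟨by simp [ENNReal.ofReal_eq_zero]; linarith, hVpos⟩
      _ ≤ ∑' n : ℕ, ∫⁻ q in B n, h q := ENNReal.tsum_le_tsum hlow
      _ = ∫⁻ q in ⋃ n, B n, h q := (lintegral_iUnion (fun n => Metric.isOpen_ball.measurableSet) hdisj h).symm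
      _ ≤ ∫⁻ q, h q := setLIntegral_le_lintegral _ _
  exact absurd (le_antisymm le_top htop ▸ hfin) (by simp [le_antisymm le_top htop])

lemma exists_orth_map {d : ℕ} (u w : Fin d → ℝ) (huw : u ⬝ᵥ u = w ⬝ᵥ w) :
    ∃ Q : Matrix (Fin d) (Fin d) ℝ, Q * Qᵀ = 1 ∧ Q.mulVec u = w := by
  by_cases h : u = w
  · exact ⟨1, by simp, by simp [h]⟩
  · set n : Fin d → ℝ := u - w with hn
    have hn0 : n ≠ 0 := sub_ne_zero.mpr h
    have hnn : 0 < n ⬝ᵥ n := by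
      rcases Function.ne_iff.mp hn0 with ⟨i, hi⟩
      exact Finset.sum_pos' (fun j _ => mul_self_nonneg _)
        ⟨i, Finset.mem_univ i, mul_self_pos.mpr (by simpa using hi)⟩
    set Q : Matrix (Fin d) (Fin d) ℝ := 1 - (2 / (n ⬝ᵥ n)) • vecMulVec n n with hQ
    have hsymm : Qᵀ = Q := by
      simp only [hQ, transpose_sub, transpose_smul, transpose_one]
      congr 1
      ext i j
      simp [vecMulVec_apply, mul_comm]
    have hMM : vecMulVec n n * vecMulVec n n = (n ⬝ᵥ n) • vecMulVec n n := by
      ext i j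
      simp only [mul_apply, vecMulVec_apply, Matrix.smul_apply, smul_eq_mul, dotProduct]
      rw [Finset.sum_mul]
      exact Finset.sum_congr rfl fun k _ => by ring
    have hQQ : Q * Qᵀ = 1 := by
      rw [hsymm, hQ]
      simp only [sub_mul, mul_sub, one_mul, mul_one, smul_mul_smul_comm, hMM, smul_smul]
      have hnn' : n ⬝ᵥ n ≠ 0 := hnn.ne'
      match_scalars
      · ring
      · field_simp
        ring
    refine ⟨Q, hQQ, ?_⟩
    have hmv : (vecMulVec n n).mulVec u = (n ⬝ᵥ u) • n := by
      ext i
      simp only [mulVec, dotProduct, vecMulVec_apply, Pi.smul_apply, smul_eq_mul]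
      rw [Finset.sum_mul]
      exact Finset.sum_congr rfl fun k _ => by ring
    have hkey : n ⬝ᵥ n = 2 * (n ⬝ᵥ u) := by
      simp only [hn, sub_dotProduct, dotProduct_sub]
      have hc := dotProduct_comm u w
      linarith
    rw [hQ, sub_mulVec, one_mulVec, smul_mulVec, hmv, smul_smul]
    have hnu : n ⬝ᵥ u ≠ 0 := by nlinarith
    have : 2 / (n ⬝ᵥ n) * (n ⬝ᵥ u) = 1 := by
      rw [hkey]; field_simp
    rw [this, one_smul, hn]
    abel

lemma iso_zero {d : ℕ} {g : (Fin d → ℝ) → (Fin d → ℝ)}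
    (hiso : ∀ Q : Matrix (Fin d) (Fin d) ℝ, Q * Qᵀ = 1 →
      ∀ r, g (Q.mulVec r) = Q.mulVec (g r))
    {v : Fin d → ℝ} (hv : v ≠ 0) (hvg : ∀ r, v ⬝ᵥ g r = 0) : ∀ r, g r = 0 := by
  intro r
  by_contra hgr
  have hvv : 0 < v ⬝ᵥ v := by
    rcases Function.ne_iff.mp hv with ⟨i, hi⟩
    exact Finset.sum_pos' (fun j _ => mul_self_nonneg _)
      ⟨i, Finset.mem_univ i, mul_self_pos.mpr (by simpa using hi)⟩
  have hgg : 0 < g r ⬝ᵥ g r := by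
    rcases Function.ne_iff.mp hgr with ⟨i, hi⟩
    exact Finset.sum_pos' (fun j _ => mul_self_nonneg _)
      ⟨i, Finset.mem_univ i, mul_self_pos.mpr (by simpa using hi)⟩
  set s : ℝ := Real.sqrt ((v ⬝ᵥ v) / (g r ⬝ᵥ g r)) with hs
  have hspos : 0 < s := Real.sqrt_pos.mpr (by positivity)
  set w : Fin d → ℝ := s • g r with hw
  have hww : w ⬝ᵥ w = v ⬝ᵥ v := by
    rw [hw, smul_dotProduct, dotProduct_smul, smul_eq_mul, smul_eq_mul, ← mul_assoc]
    have hss : s * s = (v ⬝ᵥ v) / (g r ⬝ᵥ g r) :=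
      Real.mul_self_sqrt (by positivity)
    rw [hss]
    field_simp
  obtain ⟨P, hP, hPv⟩ := exists_orth_map v w hww.symm
  -- use Q := Pᵀ in hiso
  have hPt : Pᵀ * Pᵀᵀ = 1 := by
    rw [transpose_transpose]
    exact mul_eq_one_comm.mp hP
  have h0 : v ⬝ᵥ g (Pᵀ.mulVec r) = 0 := hvg _
  rw [hiso Pᵀ hPt r, dotProduct_mulVec] at h0
  have hvP : v ᵥ* Pᵀ = w := by
    rw [← hPv]
    ext j
    simp [vecMul, mulVec, dotProduct, transpose_apply, mul_comm]
  rw [hvP, hw, smul_dotProduct] at h0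
  have : s * (g r ⬝ᵥ g r) ≠ 0 := by positivity
  exact this (by simpa using h0)

lemma quadform_integral {d : ℕ} (G H : (Fin d → ℝ) → (Fin d → ℝ))
    (hint : ∀ i j, Integrable (fun q => G q i * H q j)) (v : Fin d → ℝ) :
    v ⬝ᵥ (Matrix.of fun i j => ∫ q, G q i * H q j).mulVec v
      = ∫ q, (v ⬝ᵥ G q) * (v ⬝ᵥ H q) := by
  have hrhs : (fun q => (v ⬝ᵥ G q) * (v ⬝ᵥ H q))
      = fun q => ∑ i, ∑ j, (v i * v j) * (G q i * H q j) := by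
    funext q
    rw [dotProduct, dotProduct, Finset.sum_mul_sum]
    exact Finset.sum_congr rfl fun i _ => Finset.sum_congr rfl fun j _ => by ring
  rw [hrhs, integral_finset_sum _ (fun i _ => integrable_finset_sum _
    (fun j _ => (hint i j).const_mul _))]
  simp_rw [integral_finset_sum _ (fun j _ => (hint _ j).const_mul _), integral_const_mul]
  rw [dotProduct]
  simp_rw [mulVec, dotProduct, of_apply, Finset.mul_sum]
  exact Finset.sum_congr rfl fun i _ => Finset.sum_congr rfl fun j _ => by ring

lemma key_pos {d : ℕ} {g : (Fin d → ℝ) → (Fin d → ℝ)}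
    (hg : Continuous g)
    (hiso : ∀ Q : Matrix (Fin d) (Fin d) ℝ, Q * Qᵀ = 1 →
      ∀ r, g (Q.mulVec r) = Q.mulVec (g r))
    (h2 : Integrable (fun q : Fin d → ℝ => ‖g q‖ ^ 2))
    (hne : ¬ (∀ᵐ q : Fin d → ℝ, g q = 0))
    {x : Fin d → ℝ} (hx : x ≠ 0) {v : Fin d → ℝ} (hv : v ≠ 0)
    {ε : ℝ} (hε : ε = 1 ∨ ε = -1) :
    0 < (∫ q, (v ⬝ᵥ g q) * (v ⬝ᵥ g q)) + ε * ∫ q, (v ⬝ᵥ g (x - q)) * (v ⬝ᵥ g (-q)) := by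
  have hε2 : ε ^ 2 = 1 := by rcases hε with h | h <;> rw [h] <;> norm_num
  set f : (Fin d → ℝ) → ℝ := fun q => v ⬝ᵥ g q with hf
  have hfc : Continuous f := by
    apply continuous_finset_sum
    exact fun i _ => continuous_const.mul ((continuous_apply i).comp hg)
  set S : ℝ := ∑ i, |v i| with hS
  have hSnn : 0 ≤ S := Finset.sum_nonneg fun i _ => abs_nonneg _
  have hfb : ∀ q, |f q| ≤ S * ‖g q‖ := by
    intro q
    calc |f q| ≤ ∑ i, |v i * g q i| := Finset.abs_sum_le_sum_abs _ _
      _ ≤ ∑ i, |v i| * ‖g q‖ := by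
          apply Finset.sum_le_sum
          intro i _
          rw [abs_mul]
          exact mul_le_mul_of_nonneg_left
            (by simpa [Real.norm_eq_abs] using norm_le_pi_norm (g q) i) (abs_nonneg _)
      _ = S * ‖g q‖ := by rw [← Finset.sum_mul]
  have hf2 : Integrable (fun q => f q ^ 2) := by
    apply Integrable.mono (h2.const_mul (S ^ 2)) ((hfc.pow 2).aestronglyMeasurable)
    filter_upwards with q
    simp only [Pi.pow_apply, Pi.mul_apply, Pi.add_apply, Function.comp_apply]
    have h1 : |f q| ^ 2 ≤ (S * ‖g q‖) ^ 2 := by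
      apply pow_le_pow_left₀ (abs_nonneg _) (hfb q)
    rw [Real.norm_eq_abs, Real.norm_eq_abs, abs_pow, sq_abs (f q)] at *
    rw [abs_of_nonneg (by positivity : (0:ℝ) ≤ S ^ 2 * ‖g q‖ ^ 2)]
    calc f q ^ 2 = |f q| ^ 2 := (sq_abs _).symm
      _ ≤ (S * ‖g q‖) ^ 2 := pow_le_pow_left₀ (abs_nonneg _) (hfb q) 2
      _ = S ^ 2 * ‖g q‖ ^ 2 := by ring
  set u : (Fin d → ℝ) → ℝ := fun q => f (x + q) with hu
  have huc : Continuous u := hfc.comp (continuous_const.add continuous_id)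
  have hu2 : Integrable (fun q => u q ^ 2) := (hf2.comp_add_left x : _)
  have huf : Integrable (fun q => u q * f q) := by
    apply Integrable.mono (hu2.add hf2) ((huc.mul hfc).aestronglyMeasurable)
    filter_upwards with q
    simp only [Pi.pow_apply, Pi.mul_apply, Pi.add_apply, Function.comp_apply]
    rw [Real.norm_eq_abs, Real.norm_eq_abs, abs_mul]
    have h1 : |u q| * |f q| ≤ u q ^ 2 + f q ^ 2 := by
      nlinarith [sq_nonneg (|u q| - |f q|), abs_nonneg (u q), abs_nonneg (f q),
        sq_abs (u q), sq_abs (f q)]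
    calc |u q| * |f q| ≤ u q ^ 2 + f q ^ 2 := h1
      _ ≤ |u q ^ 2 + f q ^ 2| := le_abs_self _
  have hIeq : ∫ q, u q ^ 2 = ∫ q, f q ^ 2 := integral_add_left_eq_self (fun q => f q ^ 2) x
  have hDeq : ∫ q, (v ⬝ᵥ g (x - q)) * (v ⬝ᵥ g (-q)) = ∫ q, u q * f q := by
    have h := integral_neg_eq_self (fun q => u q * f q) volume
    simp only [hu, hf] at h ⊢
    simp only [sub_eq_add_neg]
    exact h
  set φ : (Fin d → ℝ) → ℝ := fun q => u q + ε * f q with hφ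
  have hφc : Continuous φ := huc.add (continuous_const.mul hfc)
  have hexp : ∀ q, φ q ^ 2 = u q ^ 2 + (2 * ε) * (u q * f q) + f q ^ 2 := by
    intro q
    simp only [hφ]
    linear_combination (f q ^ 2) * hε2
  have hφ2 : Integrable (fun q => φ q ^ 2) := by
    have : (fun q => φ q ^ 2) = fun q => u q ^ 2 + (2 * ε) * (u q * f q) + f q ^ 2 :=
      funext hexp
    rw [this]
    exact (hu2.add (huf.const_mul _)).add hf2
  have hhalf : (∫ q, f q ^ 2) + ε * ∫ q, u q * f q = (1/2) * ∫ q, φ q ^ 2 := by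
    have e0 : ∫ q, φ q ^ 2 = ∫ q, (u q ^ 2 + (2 * ε) * (u q * f q)) + f q ^ 2 := by
      apply integral_congr_ae
      filter_upwards with q
      rw [hexp q]
    have e1 : ∫ q, ((u q ^ 2 + (2 * ε) * (u q * f q)) + f q ^ 2)
        = (∫ q, u q ^ 2 + (2 * ε) * (u q * f q)) + ∫ q, f q ^ 2 :=
      integral_add (hu2.add (huf.const_mul _)) hf2
    have e2 : ∫ q, (u q ^ 2 + (2 * ε) * (u q * f q))
        = (∫ q, u q ^ 2) + ∫ q, (2 * ε) * (u q * f q) :=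
      integral_add hu2 (huf.const_mul _)
    have : ∫ q, φ q ^ 2 = (∫ q, u q ^ 2) + ((2*ε) * ∫ q, u q * f q) + ∫ q, f q ^ 2 := by
      rw [e0, e1, e2, integral_const_mul]
    rw [this, hIeq]
    ring
  have hgoal : (∫ q, (v ⬝ᵥ g q) * (v ⬝ᵥ g q)) + ε * ∫ q, (v ⬝ᵥ g (x - q)) * (v ⬝ᵥ g (-q))
      = (1/2) * ∫ q, φ q ^ 2 := by
    rw [hDeq, ← hhalf]
    congr 1
    apply integral_congr_ae
    filter_upwards with q
    rw [← sq]
  rw [hgoal]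
  -- positivity
  have hnonneg : 0 ≤ ∫ q, φ q ^ 2 := integral_nonneg fun q => sq_nonneg _
  rcases lt_or_eq_of_le hnonneg with hpos | heq
  · linarith
  · exfalso
    have hzero : ∀ q, φ q = 0 := by
      have h0 : (fun q => φ q ^ 2) =ᵐ[volume] 0 :=
        (integral_eq_zero_iff_of_nonneg (fun q => sq_nonneg _) hφ2).mp heq.symm
      have := ((hφc.pow 2).ae_eq_iff_eq volume continuous_zero).mp h0
      intro q
      have := congrFun this q
      simpa [pow_eq_zero_iff] using this
    have hper : ∀ q, f (q + (x + x)) = f q := by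
      intro q
      have e1 : q + (x + x) = x + (x + q) := by abel
      have h1 : ∀ w, f (x + w) = -(ε * f w) := by
        intro w
        have := hzero w
        simp only [hφ, hu] at this
        linarith
      rw [e1, h1 (x + q), h1 q]
      have : ε * (ε * f q) = f q := by
        have : ε * ε = 1 := by rcases hε with h | h <;> rw [h] <;> norm_num
        calc ε * (ε * f q) = (ε * ε) * f q := by ring
          _ = f q := by rw [this, one_mul]
      linarith [this]
    have hxx : x + x ≠ 0 := by
      intro h
      apply hx
      have h2x : (2:ℝ) • x = 0 := by rw [two_smul]; exact h
      rcases smul_eq_zero.mp h2x with h' | h'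
      · norm_num at h'
      · exact h'
    have hf0 : ∀ q, f q = 0 := periodic_zero hfc hf2 hxx hper
    have hg0 : ∀ r, g r = 0 := iso_zero hiso hv hf0
    exact hne (Filter.Eventually.of_forall hg0)

theorem stmt10 {d : ℕ} (g : (Fin d → ℝ) → (Fin d → ℝ))
    (hg : Continuous g)
    (hiso : ∀ Q : Matrix (Fin d) (Fin d) ℝ, Q * Qᵀ = 1 →
      ∀ r, g (Q.mulVec r) = Q.mulVec (g r))
    (h1 : Integrable (fun q : Fin d → ℝ => ‖g q‖))
    (h2 : Integrable (fun q : Fin d → ℝ => ‖g q‖ ^ 2))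
    (hne : ¬ (∀ᵐ q : Fin d → ℝ, g q = 0))
    (x : Fin d → ℝ) (hx : x ≠ 0) :
    ((Matrix.of fun i j => ∫ q : Fin d → ℝ, g q i * g q j) +
      (Matrix.of fun i j => ∫ q : Fin d → ℝ, g (x - q) i * g (-q) j) :
        Matrix (Fin d) (Fin d) ℝ).PosDef ∧
    ((Matrix.of fun i j => ∫ q : Fin d → ℝ, g q i * g q j) -
      (Matrix.of fun i j => ∫ q : Fin d → ℝ, g (x - q) i * g (-q) j) :
        Matrix (Fin d) (Fin d) ℝ).PosDef := by
  -- oddness of g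
  have godd : ∀ r, g (-r) = -(g r) := by
    intro r
    have hQ : (-1 : Matrix (Fin d) (Fin d) ℝ) * (-1 : Matrix (Fin d) (Fin d) ℝ)ᵀ = 1 := by
      simp
    have := hiso (-1) hQ r
    simpa [neg_mulVec, one_mulVec] using this
  -- coordinate bounds
  have hcoord : ∀ (G H : (Fin d → ℝ) → (Fin d → ℝ)), Continuous G → Continuous H →
      Integrable (fun q => ‖G q‖ ^ 2) → Integrable (fun q => ‖H q‖ ^ 2) →
      ∀ i j, Integrable (fun q => G q i * H q j) := by
    intro G H hGc hHc hG2 hH2 i j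
    apply Integrable.mono (hG2.add hH2)
      (((continuous_apply i).comp hGc).mul ((continuous_apply j).comp hHc)).aestronglyMeasurable
    filter_upwards with q
    simp only [Pi.pow_apply, Pi.mul_apply, Pi.add_apply, Function.comp_apply]
    rw [Real.norm_eq_abs, abs_mul]
    have hGi : |G q i| ≤ ‖G q‖ := by
      simpa [Real.norm_eq_abs] using norm_le_pi_norm (G q) i
    have hHj : |H q j| ≤ ‖H q‖ := by
      simpa [Real.norm_eq_abs] using norm_le_pi_norm (H q) j
    have h1' : |G q i| * |H q j| ≤ ‖G q‖ ^ 2 + ‖H q‖ ^ 2 := by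
      nlinarith [abs_nonneg (G q i), abs_nonneg (H q j), norm_nonneg (G q), norm_nonneg (H q),
        sq_nonneg (‖G q‖ - ‖H q‖)]
    calc |G q i| * |H q j| ≤ ‖G q‖ ^ 2 + ‖H q‖ ^ 2 := h1'
      _ ≤ ‖‖G q‖ ^ 2 + ‖H q‖ ^ 2‖ := le_abs_self _
  have hCint : ∀ i j, Integrable (fun q => g q i * g q j) := hcoord g g hg hg h2 h2
  have hgsubc : Continuous (fun q => g (x - q)) := hg.comp (continuous_const.sub continuous_id)
  have hgnegc : Continuous (fun q => g (-q)) := hg.comp continuous_neg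
  have hgsub2 : Integrable (fun q => ‖g (x - q)‖ ^ 2) := h2.comp_sub_left x
  have hgneg2 : Integrable (fun q => ‖g (-q)‖ ^ 2) := h2.comp_neg
  have hDint : ∀ i j, Integrable (fun q => g (x - q) i * g (-q) j) :=
    hcoord _ _ hgsubc hgnegc hgsub2 hgneg2
  set C : Matrix (Fin d) (Fin d) ℝ := Matrix.of fun i j => ∫ q, g q i * g q j with hC
  set D : Matrix (Fin d) (Fin d) ℝ := Matrix.of fun i j => ∫ q, g (x - q) i * g (-q) j with hD
  -- symmetry
  have hCsym : C.IsHermitian := by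
    ext i j
    simp only [conjTranspose_apply, hC, of_apply, star_trivial]
    apply integral_congr_ae
    filter_upwards with q
    ring
  have hDsym : D.IsHermitian := by
    have key : ∀ i j, (∫ q, g (x - q) i * g (-q) j) = -∫ q, g (x - q) i * g q j := by
      intro i j
      rw [← integral_neg]
      apply integral_congr_ae
      filter_upwards with q
      rw [godd q]
      simp
    have key2 : ∀ (F : (Fin d → ℝ) → ℝ), (∫ q, F (x - q)) = ∫ q, F q := by
      intro F
      have h1 : (∫ q, F (x + -q)) = ∫ q, F (x + q) := integral_neg_eq_self (fun q => F (x + q)) volume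
      have h2' : (∫ q, F (x + q)) = ∫ q, F q := integral_add_left_eq_self F x
      simp only [← sub_eq_add_neg] at h1
      rw [h1] at *
      · exact h2'
    ext i j
    simp only [conjTranspose_apply, hD, of_apply, star_trivial]
    -- goal : ∫ q, g (x - q) j * g (-q) i = ∫ q, g (x - q) i * g (-q) j
    rw [key j i, key i j]
    congr 1
    have := key2 (fun q => g (x - q) i * g q j)
    -- this : ∫ q, g (x - (x - q)) i * g (x - q) j = ∫ q, g (x - q) i * g q j
    rw [← this]
    apply integral_congr_ae
    filter_upwards with q
    have e1 : x - (x - q) = q := by abel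
    rw [e1]
    ring
  -- quadforms
  have hQC : ∀ v : Fin d → ℝ, v ⬝ᵥ C.mulVec v = ∫ q, (v ⬝ᵥ g q) * (v ⬝ᵥ g q) :=
    fun v => quadform_integral g g hCint v
  have hQD : ∀ v : Fin d → ℝ, v ⬝ᵥ D.mulVec v
      = ∫ q, (v ⬝ᵥ g (x - q)) * (v ⬝ᵥ g (-q)) :=
    fun v => quadform_integral _ _ hDint v
  constructor
  · refine posDef_iff_dotProduct_mulVec.mpr ⟨hCsym.add hDsym, ?_⟩
    intro v hv
    simp only [star_trivial, add_mulVec, dotProduct_add]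
    rw [hQC v, hQD v]
    have := key_pos hg hiso h2 hne hx hv (Or.inl rfl : (1:ℝ) = 1 ∨ (1:ℝ) = -1)
    simpa using this
  · refine posDef_iff_dotProduct_mulVec.mpr ⟨hCsym.sub hDsym, ?_⟩
    intro v hv
    simp only [star_trivial, sub_mulVec, dotProduct_sub]
    rw [hQC v, hQD v]
    have := key_pos hg hiso h2 hne hx hv (Or.inr rfl : (-1:ℝ) = 1 ∨ (-1:ℝ) = -1)
    simpa [neg_mul, ← sub_eq_add_neg] using this
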